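/- arXiv:2311.17517 — 2 statements merged into one kernel-verified Lean document; each statement's English description precedes it below -/
import Mathlib

section
/- Let C > 0 and let V : ℝ → ℝ be twice continuously differentiable with V(ξ) < C for all ξ, satisfying the solitary-wave profile equation C V''(ξ) = C V(ξ) − V(ξ)/(C − V(ξ)) − (1/2) V(ξ)² for all ξ, and suppose V(ξ) → 0 and V'(ξ) → 0 as ξ → −∞. Then for every ξ ∈ ℝ: (C/2) ((V'(ξ))² − V(ξ)²) + (1/6) V(ξ)³ − V(ξ) − C · log(1 − V(ξ)/C) = 0. -/
open Filter

/-- First integral of the solitary-wave profile equation of the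
Amick–Schonbek system: if `C V'' = C V - V/(C - V) - (1/2) V²` with
`V, V' → 0` at `-∞` and `V < C`, then
`(C/2)((V')² - V²) + (1/6) V³ - V - C log(1 - V/C) = 0` identically. -/
theorem amick_schonbek_first_integral
    (C : ℝ) (hC : 0 < C) (V : ℝ → ℝ) (hV : ContDiff ℝ 2 V)
    (hlt : ∀ ξ : ℝ, V ξ < C)
    (ode : ∀ ξ : ℝ,
      C * deriv (deriv V) ξ
        = C * V ξ - V ξ / (C - V ξ) - (1 / 2) * (V ξ) ^ 2)
    (hV0 : Tendsto V atBot (nhds 0))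
    (hV'0 : Tendsto (deriv V) atBot (nhds 0)) :
    ∀ ξ : ℝ,
      (C / 2) * ((deriv V ξ) ^ 2 - (V ξ) ^ 2) + (1 / 6) * (V ξ) ^ 3
        - V ξ - C * Real.log (1 - V ξ / C) = 0 := by
  have hC' : C ≠ 0 := hC.ne'
  set E : ℝ → ℝ := fun ξ =>
    (C / 2) * ((deriv V ξ) ^ 2 - (V ξ) ^ 2) + (1 / 6) * (V ξ) ^ 3
      - V ξ - C * Real.log (1 - V ξ / C) with hEdef
  have hVd : Differentiable ℝ V := hV.differentiable (by norm_num)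
  have hV'd : Differentiable ℝ (deriv V) := by
    have h2 : ContDiff ℝ ((1 : ℕ∞) + 1) V := by exact_mod_cast hV
    exact ((contDiff_succ_iff_deriv.mp h2).2.2).differentiable (by norm_num)
  have hEderiv : ∀ ξ, HasDerivAt E 0 ξ := by
    intro ξ
    have h1 : HasDerivAt V (deriv V ξ) ξ := (hVd ξ).hasDerivAt
    have h2 : HasDerivAt (deriv V) (deriv (deriv V) ξ) ξ := (hV'd ξ).hasDerivAt
    have hpos : 0 < 1 - V ξ / C := by
      rw [sub_pos, div_lt_one hC]; exact hlt ξ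
    have hne : (1 : ℝ) - V ξ / C ≠ 0 := hpos.ne'
    have hCV : C - V ξ ≠ 0 := sub_ne_zero.mpr (hlt ξ).ne'
    have hin : HasDerivAt (fun x => 1 - V x / C) (-(deriv V ξ) / C) ξ := by
      simpa [neg_div] using (show HasDerivAt (fun x => 1 - V x / C) (0 - deriv V ξ / C) ξ from
        (hasDerivAt_const ξ (1:ℝ)).sub (h1.div_const C))
    have hlog : HasDerivAt (fun x => Real.log (1 - V x / C))
        ((-(deriv V ξ) / C) / (1 - V ξ / C)) ξ := hin.log hne
    have hE' : HasDerivAt E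
        ((C/2) * (2 * deriv V ξ ^ 1 * deriv (deriv V) ξ
            - 2 * V ξ ^ 1 * deriv V ξ)
          + (1/6) * (3 * V ξ ^ 2 * deriv V ξ) - deriv V ξ
          - C * ((-(deriv V ξ) / C) / (1 - V ξ / C))) ξ := by
      exact ((((h2.pow 2).sub (h1.pow 2)).const_mul (C/2)).add
        ((h1.pow 3).const_mul (1/6))).sub h1 |>.sub (hlog.const_mul C)
    have key : (C/2) * (2 * deriv V ξ ^ 1 * deriv (deriv V) ξ
            - 2 * V ξ ^ 1 * deriv V ξ)
          + (1/6) * (3 * V ξ ^ 2 * deriv V ξ) - deriv V ξ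
          - C * ((-(deriv V ξ) / C) / (1 - V ξ / C)) = 0 := by
      have hode := ode ξ
      have hode' : C * deriv (deriv V) ξ * (C - V ξ)
          = (C * V ξ - (1/2) * V ξ ^ 2) * (C - V ξ) - V ξ := by
        field_simp at hode
        linarith [hode]
      have hsub : C * ((-(deriv V ξ) / C) / (1 - V ξ / C))
          = -(deriv V ξ) * C / (C - V ξ) := by
        have hden : C * (1 - V ξ / C) = C - V ξ := by field_simp
        rw [div_div, hden]
        ring
      rw [hsub]
      rw [sub_eq_zero, eq_div_iff hCV] at *
      linear_combination (deriv V ξ) * hode'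
    rwa [key] at hE'
  have hEdiff : Differentiable ℝ E := fun ξ => (hEderiv ξ).differentiableAt
  have hconst : ∀ x y : ℝ, E x = E y := fun x y =>
    is_const_of_deriv_eq_zero hEdiff (fun ξ => (hEderiv ξ).deriv) x y
  have h1 : Tendsto (fun ξ => 1 - V ξ / C) atBot (nhds 1) := by
    have h : Tendsto (fun ξ => (1:ℝ) - V ξ / C) atBot (nhds (1 - 0 / C)) :=
      tendsto_const_nhds.sub (hV0.div_const C)
    simpa using h
  have hlog0 : Tendsto (fun ξ => Real.log (1 - V ξ / C)) atBot (nhds 0) := by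
    have := (Real.continuousAt_log (by norm_num : (1:ℝ) ≠ 0)).tendsto.comp h1
    simpa [Function.comp_def] using this
  have hlim : Tendsto E atBot (nhds 0) := by
    have T := ((((hV'0.pow 2).sub (hV0.pow 2)).const_mul (C/2)).add
      ((hV0.pow 3).const_mul (1/6))).sub hV0 |>.sub (hlog0.const_mul C)
    rw [hEdef]
    simpa using T
  intro ξ
  have hconst' : Tendsto E atBot (nhds (E ξ)) := by
    have heq : E = fun _ => E ξ := funext fun y => hconst y ξ
    rw [heq]; exact tendsto_const_nhds
  have : E ξ = 0 := tendsto_nhds_unique hconst' hlim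
  exact this
end

section
/- Let C > 0 and let V : ℝ → ℝ be twice continuously differentiable with V(ξ) < C for all ξ, satisfying the solitary-wave profile equation C V''(ξ) = C V(ξ) − V(ξ)/(C − V(ξ)) − (1/2) V(ξ)² for all ξ, and with V(ξ) → 0 and V'(ξ) → 0 as ξ → −∞. If ξ₀ ∈ ℝ is a critical point of V, i.e. V'(ξ₀) = 0, and m := V(ξ₀), then m satisfies the amplitude equation (C/2) m² + m + C · log(1 − m/C) = (1/6) m³. -/
open Filter

/-- The amplitude equation at a critical point of the solitary-wave profile:
if `V` solves `C V'' = C V - V/(C - V) - (1/2) V²` with `V, V' → 0` at `-∞`,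
`V < C`, and `V'(ξ₀) = 0`, then `m = V(ξ₀)` satisfies
`(C/2) m² + m + C log(1 - m/C) = (1/6) m³`. -/
theorem amick_schonbek_amplitude_equation
    (C : ℝ) (hC : 0 < C) (V : ℝ → ℝ) (hV : ContDiff ℝ 2 V)
    (hlt : ∀ ξ : ℝ, V ξ < C)
    (ode : ∀ ξ : ℝ,
      C * deriv (deriv V) ξ
        = C * V ξ - V ξ / (C - V ξ) - (1 / 2) * (V ξ) ^ 2)
    (hV0 : Tendsto V atBot (nhds 0))
    (hV'0 : Tendsto (deriv V) atBot (nhds 0))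
    (ξ₀ : ℝ) (hcrit : deriv V ξ₀ = 0)
    (m : ℝ) (hm : m = V ξ₀) :
    (C / 2) * m ^ 2 + m + C * Real.log (1 - m / C) = (1 / 6) * m ^ 3 := by
  have hVd : Differentiable ℝ V := hV.differentiable (by norm_num)
  have hV2 : ContDiff ℝ 1 (deriv V) := by
    have := (contDiff_succ_iff_deriv (n := 1)).mp (by exact_mod_cast hV)
    exact this.2.2
  have hV'd : Differentiable ℝ (deriv V) := hV2.differentiable one_ne_zero
  have hpos : ∀ x, 0 < C - V x := fun x => sub_pos.mpr (hlt x)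
  set E : ℝ → ℝ := fun x =>
    C / 2 * ((deriv V x) ^ 2 - (V x) ^ 2) + (1/6) * (V x) ^ 3 - V x
      - C * Real.log (1 - V x / C) with hE
  have hED : ∀ x, HasDerivAt E 0 x := by
    intro x
    have h1 : HasDerivAt V (deriv V x) x := (hVd x).hasDerivAt
    have h2 : HasDerivAt (deriv V) (deriv (deriv V) x) x := (hV'd x).hasDerivAt
    have hne : (1 - V x / C) ≠ 0 := by
      have : 0 < 1 - V x / C := by
        have := hpos x
        rw [sub_pos, div_lt_one hC]
        exact hlt x
      linarith
    have hlog : HasDerivAt (fun y => Real.log (1 - V y / C))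
        ((0 - deriv V x / C) / (1 - V x / C)) x := by
      have := (Real.hasDerivAt_log hne).comp x
        ((hasDerivAt_const x (1:ℝ)).fun_sub (h1.div_const C))
      simpa [Function.comp_def, div_eq_inv_mul] using this
    have hall : HasDerivAt E
        (C / 2 * (2 * deriv V x * deriv (deriv V) x - 2 * V x * deriv V x)
          + (1/6) * (3 * (V x)^2 * deriv V x) - deriv V x
          - C * ((0 - deriv V x / C) / (1 - V x / C))) x := by
      have e1 : HasDerivAt (fun y => (deriv V y)^2 - (V y)^2)
          (2 * deriv V x * deriv (deriv V) x - 2 * V x * deriv V x) x := by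
        have a := h2.fun_pow 2
        have b := h1.fun_pow 2
        simpa [mul_comm, mul_assoc, mul_left_comm] using a.fun_sub b
      have e2 : HasDerivAt (fun y => (V y)^3) (3 * (V x)^2 * deriv V x) x := by
        simpa [mul_comm, mul_assoc, mul_left_comm] using h1.fun_pow 3
      exact (((e1.const_mul (C/2)).add (e2.const_mul (1/6))).sub h1).sub
        (hlog.const_mul C)
    convert hall using 1
    have hCV : C - V x ≠ 0 := ne_of_gt (hpos x)
    have hode := ode x
    have hdd : deriv (deriv V) x = (C * V x - V x / (C - V x) - (1/2) * (V x)^2) / C := by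
      field_simp at hode ⊢; linarith
    rw [hdd]
    have h1C : 1 - V x / C = (C - V x) / C := by field_simp
    rw [h1C]
    field_simp
    ring
  have hconst : ∀ x, E x = E ξ₀ := by
    intro x
    exact is_const_of_deriv_eq_zero (fun y => (hED y).differentiableAt)
      (fun y => (hED y).deriv) x ξ₀
  have hlim : Tendsto E atBot (nhds 0) := by
    have : Tendsto E atBot (nhds (C / 2 * ((0:ℝ)^2 - 0^2) + (1/6) * 0^3 - 0
        - C * Real.log (1 - 0 / C))) := by
      apply Tendsto.sub
      apply Tendsto.sub
      apply Tendsto.add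
      · exact ((hV'0.pow 2).sub (hV0.pow 2)).const_mul _
      · exact (hV0.pow 3).const_mul _
      · exact hV0
      · exact ((((tendsto_const_nhds).sub (hV0.div_const C)).log (by
          simpa using ne_of_gt (by positivity : (0:ℝ) < 1 - 0 / C))).const_mul C)
    simpa using this
  have hlim2 : Tendsto E atBot (nhds (E ξ₀)) :=
    tendsto_const_nhds.congr fun x => (hconst x).symm
  have hE0 : E ξ₀ = 0 := tendsto_nhds_unique hlim2 hlim
  have h := hE0
  simp only [hE] at h
  rw [hcrit, ← hm] at h
  nlinarith [h]
end
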